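/- In the two-urn experiment with parameters m = n/2 and r = b = √n·log n: the expected number of red-hat draws until the overall experiment ends (a red ball drawn from the red hat followed—possibly after repetitions—by a blue ball from the blue hat) is ((m+1)/(r+1))², which is Ω(n/log² n). -/

import Mathlib

/-- The (1-based) position of the first ball from `R` in the ordering `σ` of `m` balls. -/
noncomputable def firstIdx {m : ℕ} (R : Finset (Fin m)) (σ : Equiv.Perm (Fin m)) : ℕ :=
  1 + sInf {i : ℕ | ∃ h : i < m, σ ⟨i, h⟩ ∈ R}

open Finset Equiv

lemma firstIdx_eq {m : ℕ} (R : Finset (Fin m)) (hR : R.Nonempty) (σ : Equiv.Perm (Fin m)) :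
    firstIdx R σ = 1 + (R.image fun y => ((σ.symm y : Fin m) : ℕ)).min' (hR.image _) := by
  have hset : {i : ℕ | ∃ h : i < m, σ ⟨i, h⟩ ∈ R}
      = ↑(R.image fun y => ((σ.symm y : Fin m) : ℕ)) := by
    ext i
    simp only [Set.mem_setOf_eq, coe_image, Set.mem_image, mem_coe]
    constructor
    · rintro ⟨h, hy⟩
      exact ⟨σ ⟨i, h⟩, hy, by simp⟩
    · rintro ⟨y, hy, rfl⟩
      exact ⟨(σ.symm y).isLt, by simp [hy]⟩
  rw [firstIdx, hset, (hR.image _).csInf_eq_min']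


lemma count_min {m : ℕ} (T : Finset (Fin m)) (x : Fin m) (hx : x ∈ T) :
    (univ.filter fun σ : Equiv.Perm (Fin m) =>
        ∀ y ∈ T, y ≠ x → ((σ.symm x : Fin m) : ℕ) < ((σ.symm y : Fin m) : ℕ)).card * T.card
      = m.factorial := by
  classical
  have hT : T.Nonempty := ⟨x, hx⟩
  set p : Fin m → Equiv.Perm (Fin m) → Prop := fun z σ =>
    ∀ y ∈ T, y ≠ z → ((σ.symm z : Fin m) : ℕ) < ((σ.symm y : Fin m) : ℕ) with hp
  set g : Equiv.Perm (Fin m) → Fin m :=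
    fun σ => σ ((T.image fun y => σ.symm y).min' (hT.image _)) with hg
  have hgmem : ∀ σ, g σ ∈ T := by
    intro σ
    have := (T.image fun y => σ.symm y).min'_mem (hT.image _)
    rw [mem_image] at this
    obtain ⟨y, hy, hey⟩ := this
    simpa [hg, ← hey] using hy
  have hchar : ∀ z ∈ T, ∀ σ, g σ = z ↔ p z σ := by
    intro z hz σ
    constructor
    · intro h y hy hyz
      have h1 : σ.symm z = (T.image fun y => σ.symm y).min' (hT.image _) := by
        rw [← h]; simp [hg]
      have h2 : (T.image fun y => σ.symm y).min' (hT.image _) ≤ σ.symm y :=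
        min'_le _ _ (mem_image_of_mem _ hy)
      rcases lt_or_eq_of_le h2 with h3 | h3
      · rw [h1]; exact h3
      · exact absurd (σ.symm.injective (h1.trans h3)).symm hyz
    · intro h
      obtain ⟨y, hy, hey⟩ := mem_image.mp ((T.image fun y => σ.symm y).min'_mem (hT.image _))
      have hyz : y = z := by
        by_contra hne
        have h2 : (T.image fun w => σ.symm w).min' (hT.image _) ≤ σ.symm z :=
          min'_le _ _ (mem_image_of_mem _ hz)
        have := h y hy hne
        rw [← hey] at h2
        omega
      rw [hg]
      simp only [← hey, hyz, Equiv.apply_symm_apply]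
  have key : ∀ z ∈ T, (univ.filter (p z)).card = (univ.filter (p x)).card := by
    intro z hz
    apply Finset.card_bij' (fun σ _ => Equiv.swap z x * σ) (fun σ _ => Equiv.swap z x * σ)
    · intro σ hσ
      simp only [mem_filter, mem_univ, true_and, hp] at hσ ⊢
      have h1 : ∀ w, (Equiv.swap z x * σ).symm w = σ.symm (Equiv.swap z x w) := by
        intro w
        rw [Equiv.symm_apply_eq]
        simp [Equiv.Perm.mul_apply]
      intro y hy hyx
      rw [h1, h1, Equiv.swap_apply_right]
      have hyT : Equiv.swap z x y ∈ T := by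
        rcases eq_or_ne y z with rfl | hyz
        · rwa [Equiv.swap_apply_left]
        · rw [Equiv.swap_apply_of_ne_of_ne hyz hyx]; exact hy
      have hyne : Equiv.swap z x y ≠ z := by
        intro h
        apply hyx
        have := congrArg (Equiv.swap z x) h
        rwa [Equiv.swap_apply_self, Equiv.swap_apply_left] at this
      exact hσ _ hyT hyne
    · intro σ hσ
      simp only [mem_filter, mem_univ, true_and, hp] at hσ ⊢
      have h1 : ∀ w, (Equiv.swap z x * σ).symm w = σ.symm (Equiv.swap z x w) := by
        intro w
        rw [Equiv.symm_apply_eq]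
        simp [Equiv.Perm.mul_apply]
      intro y hy hyz
      rw [h1, h1, Equiv.swap_apply_left]
      have hyT : Equiv.swap z x y ∈ T := by
        rcases eq_or_ne y x with rfl | hyx
        · rwa [Equiv.swap_apply_right]
        · rw [Equiv.swap_apply_of_ne_of_ne hyz hyx]; exact hy
      have hyne : Equiv.swap z x y ≠ x := by
        intro h
        apply hyz
        have := congrArg (Equiv.swap z x) h
        rwa [Equiv.swap_apply_self, Equiv.swap_apply_right] at this
      exact hσ _ hyT hyne
    · intro σ _; rw [← mul_assoc, Equiv.swap_mul_self, one_mul]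
    · intro σ _; rw [← mul_assoc, Equiv.swap_mul_self, one_mul]
  have hfiber : (univ : Finset (Equiv.Perm (Fin m))).card
      = ∑ z ∈ T, (univ.filter fun σ => g σ = z).card :=
    card_eq_sum_card_fiberwise (fun σ _ => hgmem σ)
  have hcard : (univ : Finset (Equiv.Perm (Fin m))).card = m.factorial := by
    rw [card_univ, Fintype.card_perm, Fintype.card_fin]
  rw [← hcard, hfiber]
  rw [Finset.sum_congr rfl (fun z hz => by
    rw [filter_congr (fun σ _ => by rw [hchar z hz σ]), key z hz])]
  rw [sum_const, smul_eq_mul, mul_comm]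

lemma sum_firstIdx {m : ℕ} (R : Finset (Fin m)) (hR : R.Nonempty) :
    (R.card + 1) * ∑ σ : Equiv.Perm (Fin m), firstIdx R σ = (m + 1) * m.factorial := by
  classical
  have hrm : R.card ≤ m := by simpa using R.card_le_univ
  set q : Fin m → Equiv.Perm (Fin m) → Prop := fun x σ =>
    ∀ y ∈ R, ((σ.symm x : Fin m) : ℕ) < ((σ.symm y : Fin m) : ℕ) with hq
  have hs : ∀ σ : Equiv.Perm (Fin m),
      (R.image fun y => ((σ.symm y : Fin m) : ℕ)).min' (hR.image _)
        = (univ.filter fun x : Fin m => q x σ).card := by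
    intro σ
    set k := (R.image fun y => ((σ.symm y : Fin m) : ℕ)).min' (hR.image _) with hk
    have hkm : k < m := by
      obtain ⟨y, hy, hey⟩ := mem_image.mp ((R.image fun y => ((σ.symm y : Fin m) : ℕ)).min'_mem (hR.image _))
      rw [hk, ← hey]; exact (σ.symm y).isLt
    have hcond : ∀ x : Fin m, q x σ ↔ ((σ.symm x : Fin m) : ℕ) < k := by
      intro x
      rw [hq, hk, Finset.lt_min'_iff]
      simp [Finset.forall_mem_image]
    have h1 : (univ.filter fun x : Fin m => q x σ)
        = (univ.filter fun x : Fin m => ((σ.symm x : Fin m) : ℕ) < k) :=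
      filter_congr (fun x _ => by rw [hcond x])
    have h2 : (univ.filter fun x : Fin m => ((σ.symm x : Fin m) : ℕ) < k).card
        = (univ.filter fun i : Fin m => (i : ℕ) < k).card := by
      apply card_bij' (fun x _ => σ.symm x) (fun i _ => σ i) <;> intros <;> simp_all
    have h3 : (univ.filter fun i : Fin m => (i : ℕ) < k) = Finset.Iio ⟨k, hkm⟩ := by
      ext i; simp [Finset.mem_Iio, Fin.lt_def]
    rw [h1, h2, h3, Fin.card_Iio]
  have hswap : ∑ σ : Equiv.Perm (Fin m), (univ.filter fun x : Fin m => q x σ).card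
      = ∑ x : Fin m, (univ.filter fun σ : Equiv.Perm (Fin m) => q x σ).card := by
    simp only [Finset.card_filter]
    exact Finset.sum_comm
  have hx : ∀ x : Fin m, (R.card + 1) *
      (univ.filter fun σ : Equiv.Perm (Fin m) => q x σ).card
        = if x ∈ R then 0 else m.factorial := by
    intro x
    by_cases hxR : x ∈ R
    · simp only [hxR, if_true]
      have : (univ.filter fun σ : Equiv.Perm (Fin m) => q x σ) = ∅ := by
        rw [Finset.filter_eq_empty_iff]
        intro σ _ h
        exact absurd (h x hxR) (lt_irrefl _)
      rw [this]; simp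
    · simp only [hxR, if_false]
      have hmem : x ∈ insert x R := mem_insert_self x R
      have hcm := count_min (insert x R) x hmem
      rw [card_insert_of_notMem hxR] at hcm
      rw [← hcm, mul_comm]
      congr 2
      apply filter_congr
      intro σ _
      simp only [hq]
      constructor
      · intro h y hy hyx
        exact h y ((mem_insert.mp hy).resolve_left hyx)
      · intro h y hy
        exact h y (mem_insert_of_mem hy) (fun hxy => hxR (hxy ▸ hy))
  have hsum2 : ∑ x : Fin m, (if x ∈ R then 0 else m.factorial)
      = (m - R.card) * m.factorial := by
    rw [Finset.sum_ite, Finset.sum_const_zero, Finset.sum_const, zero_add, smul_eq_mul]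
    congr 1
    have : (univ.filter fun x : Fin m => ¬ x ∈ R) = Rᶜ := by ext z; simp
    rw [this, Finset.card_compl, Fintype.card_fin]
  have hfin : ∑ σ : Equiv.Perm (Fin m), firstIdx R σ
      = m.factorial + ∑ x : Fin m, (univ.filter fun σ : Equiv.Perm (Fin m) => q x σ).card := by
    rw [Finset.sum_congr rfl (fun σ _ => by rw [firstIdx_eq R hR σ, hs σ])]
    rw [Finset.sum_add_distrib, ← hswap]
    congr 1
    rw [Finset.sum_const, smul_eq_mul, mul_one, card_univ, Fintype.card_perm, Fintype.card_fin]
  rw [hfin, mul_add, Finset.mul_sum, Finset.sum_congr rfl (fun x _ => hx x), hsum2]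
  rw [← add_mul]
  congr 1
  omega

lemma sum_firstIdx_real {m : ℕ} (R : Finset (Fin m)) (hR : R.Nonempty) :
    (∑ σ : Equiv.Perm (Fin m), (firstIdx R σ : ℝ))
      = (m.factorial : ℝ) * (((m : ℝ) + 1) / ((R.card : ℝ) + 1)) := by
  have h := sum_firstIdx R hR
  have h2 : ((R.card : ℝ) + 1) * ∑ σ : Equiv.Perm (Fin m), (firstIdx R σ : ℝ)
      = ((m : ℝ) + 1) * (m.factorial : ℝ) := by
    exact_mod_cast congrArg (Nat.cast : ℕ → ℝ) h
  have hpos : ((R.card : ℝ) + 1) ≠ 0 := by positivity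
  field_simp
  linarith [h2]

/-- Two-urn experiment with `m = n/2` balls per hat and `r = b = ⌈√n·log n⌉` special
(red/blue) balls: if `X_r` and `X_b` are the positions of the first red and first blue
ball under independent uniformly random orderings, then the expected number of red-hat
draws until the experiment ends, namely `E[X_r · X_b]`, equals `((m+1)/(r+1))²`, which is
`Ω(n/log² n)`. -/
theorem two_urn_experiment_bound :
    ∃ c : ℝ, 0 < c ∧ ∃ N : ℕ, ∀ n : ℕ, N ≤ n →
      ∀ R B : Finset (Fin (n / 2)),
        R.card = ⌈Real.sqrt n * Real.log n⌉₊ →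
        B.card = ⌈Real.sqrt n * Real.log n⌉₊ →
        ((∑ σ : Equiv.Perm (Fin (n / 2)), ∑ τ : Equiv.Perm (Fin (n / 2)),
            (firstIdx R σ : ℝ) * (firstIdx B τ : ℝ)) /
          ((Fintype.card (Equiv.Perm (Fin (n / 2))) : ℝ) ^ 2)
          = (((n / 2 : ℕ) + 1 : ℝ) / ((⌈Real.sqrt n * Real.log n⌉₊ : ℝ) + 1)) ^ 2) ∧
        c * n / (Real.log n) ^ 2 ≤
          (((n / 2 : ℕ) + 1 : ℝ) / ((⌈Real.sqrt n * Real.log n⌉₊ : ℝ) + 1)) ^ 2 := by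
  refine ⟨1/16, by norm_num, 16, fun n hn R B hRc hBc => ?_⟩
  set r : ℕ := ⌈Real.sqrt n * Real.log n⌉₊ with hr
  have hn16 : (16 : ℝ) ≤ n := by exact_mod_cast hn
  have hnpos : (0 : ℝ) < n := by linarith
  have hsq : (4 : ℝ) ≤ Real.sqrt n := by
    have : (4 : ℝ) = Real.sqrt 16 := by
      rw [show (16 : ℝ) = 4 ^ 2 by norm_num, Real.sqrt_sq (by norm_num)]
    rw [this]
    exact Real.sqrt_le_sqrt hn16
  have hlog : (1 : ℝ) ≤ Real.log n := by
    rw [Real.le_log_iff_exp_le hnpos]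
    calc Real.exp 1 ≤ 16 := by
          linarith [Real.exp_one_lt_d9]
      _ ≤ n := hn16
  have hsqnn : (0:ℝ) ≤ Real.sqrt n := Real.sqrt_nonneg _
  have hL : (2 : ℝ) ≤ Real.sqrt n * Real.log n := by nlinarith
  have hLpos : (0 : ℝ) < Real.sqrt n * Real.log n := by linarith
  have hr1 : 1 ≤ r := Nat.one_le_iff_ne_zero.mpr (by
    simp only [hr, ne_eq, Nat.ceil_eq_zero, not_le]; exact hLpos)
  have hRne : R.Nonempty := Finset.card_pos.mp (by rw [hRc]; omega)
  have hBne : B.Nonempty := Finset.card_pos.mp (by rw [hBc]; omega)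
  have hfact : (0 : ℝ) < ((n/2).factorial : ℝ) := by exact_mod_cast (n/2).factorial_pos
  constructor
  · rw [← Finset.sum_mul_sum, sum_firstIdx_real R hRne, sum_firstIdx_real B hBne, hRc, hBc,
      Fintype.card_perm, Fintype.card_fin]
    field_simp
  · -- asymptotic bound
    have hrle : (r : ℝ) ≤ Real.sqrt n * Real.log n + 1 :=
      le_of_lt (Nat.ceil_lt_add_one (le_of_lt hLpos))
    have hr2 : (r : ℝ) + 1 ≤ 2 * (Real.sqrt n * Real.log n) := by linarith
    have hmge : (n : ℝ) / 2 ≤ ((n/2 : ℕ) : ℝ) + 1 := by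
      have : n ≤ 2 * (n / 2) + 2 := by omega
      have h2 : (n : ℝ) ≤ 2 * ((n/2 : ℕ) : ℝ) + 2 := by exact_mod_cast this
      linarith
    have hrpos : (0 : ℝ) < (r : ℝ) + 1 := by positivity
    have hss : Real.sqrt n * Real.sqrt n = n := Real.mul_self_sqrt (le_of_lt hnpos)
    have key : Real.sqrt n / (4 * Real.log n) ≤ (((n/2 : ℕ) : ℝ) + 1) / ((r : ℝ) + 1) := by
      rw [div_le_div_iff₀ (by positivity) hrpos]
      nlinarith [mul_le_mul_of_nonneg_left hr2 hsqnn,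
        mul_le_mul_of_nonneg_left hmge (by linarith : (0:ℝ) ≤ 4 * Real.log n)]
    have hBnn : (0 : ℝ) ≤ Real.sqrt n / (4 * Real.log n) := by positivity
    have hsqr := pow_le_pow_left₀ hBnn key 2
    have heq : (Real.sqrt n / (4 * Real.log n)) ^ 2 = 1/16 * n / (Real.log n) ^ 2 := by
      rw [div_pow, mul_pow]
      rw [sq, hss]
      ring
    linarith [hsqr, heq ▸ hsqr]
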